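/- In the setting of k circularly arranged bins with exactly m ≥ 2 nonempty bins uniformly placed, suppose each empty bin independently flips a fair coin to decide whether its 'parent' is the nearest nonempty bin in the clockwise or counterclockwise direction. Then for two distinct empty bins the probability that they have the same parent is 1.5/(m+1). -/

import Mathlib

open Finset
open scoped Classical

noncomputable def dirParent (k : ℕ) (A : Finset (ZMod k)) (i : ZMod k) (b : Bool) : ZMod k :=
  if b then
    (if h : ∃ z : ℕ, 0 < z ∧ (i + (z : ZMod k)) ∈ A then i + ((Nat.find h : ℕ) : ZMod k) else i)
  else
    (if h : ∃ z : ℕ, 0 < z ∧ (i - (z : ZMod k)) ∈ A then i - ((Nat.find h : ℕ) : ZMod k) else i)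

namespace SameParent

variable {k : ℕ} [NeZero k]

/-- the open clockwise arc from `x` to `y` contains no element of `A` -/
def Oaf (A : Finset (ZMod k)) (x y : ZMod k) : Prop :=
  ∀ z : ℕ, 0 < z → z < (y - x).val → x + (z : ZMod k) ∉ A

/-- the open clockwise arc from `i` to `j` contains exactly one element of `A`-/
def OneIn (A : Finset (ZMod k)) (i j : ZMod k) : Prop :=
  ∃ s : ℕ, 0 < s ∧ s < (j - i).val ∧ i + (s : ZMod k) ∈ A ∧
    ∀ z : ℕ, 0 < z → z < (j - i).val → z ≠ s → i + (z : ZMod k) ∉ A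

lemma val_pos_of_ne {x y : ZMod k} (h : y ≠ x) : 0 < (y - x).val := by
  rcases Nat.eq_zero_or_pos (y - x).val with h0 | h1
  · exact absurd (sub_eq_zero.mp ((ZMod.val_eq_zero _).mp h0)) h
  · exact h1

lemma add_val_sub (x y : ZMod k) : x + (((y - x).val : ℕ) : ZMod k) = y := by
  rw [ZMod.natCast_zmod_val]; ring

lemma sub_val_sub (x y : ZMod k) : x - (((x - y).val : ℕ) : ZMod k) = y := by
  rw [ZMod.natCast_zmod_val]; ring

lemma dirParent_true_eq_iff {A : Finset (ZMod k)} (hA : A.Nonempty) {i : ZMod k} (hi : i ∉ A)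
    (a : ZMod k) : dirParent k A i true = a ↔ a ∈ A ∧ Oaf A i a := by
  obtain ⟨c, hc⟩ := hA
  have hci : c ≠ i := fun h => hi (h ▸ hc)
  have hex : ∃ z : ℕ, 0 < z ∧ (i + (z : ZMod k)) ∈ A :=
    ⟨(c - i).val, val_pos_of_ne hci, by rw [add_val_sub]; exact hc⟩
  have hdp : dirParent k A i true = i + ((Nat.find hex : ℕ) : ZMod k) := by
    simp only [dirParent, if_true, dif_pos hex]
  have hfind := Nat.find_spec hex
  have hfk : Nat.find hex < k :=
    lt_of_le_of_lt (Nat.find_min' hex ⟨val_pos_of_ne hci, by rw [add_val_sub]; exact hc⟩)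
      (ZMod.val_lt _)
  constructor
  · rintro rfl
    have hval : (dirParent k A i true - i).val = Nat.find hex := by
      rw [hdp, add_sub_cancel_left, ZMod.val_cast_of_lt hfk]
    refine ⟨by rw [hdp]; exact hfind.2, ?_⟩
    intro z hz0 hzlt hzA
    rw [hval] at hzlt
    exact Nat.find_min hex hzlt ⟨hz0, hzA⟩
  · rintro ⟨ha, hoaf⟩
    have hai : a ≠ i := fun h => hi (h ▸ ha)
    have h1 : Nat.find hex ≤ (a - i).val :=
      Nat.find_min' hex ⟨val_pos_of_ne hai, by rw [add_val_sub]; exact ha⟩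
    have h2 : ¬ Nat.find hex < (a - i).val := fun hlt =>
      hoaf (Nat.find hex) hfind.1 hlt hfind.2
    have : Nat.find hex = (a - i).val := by omega
    rw [hdp, this, add_val_sub]

lemma dirParent_false_eq_iff {A : Finset (ZMod k)} (hA : A.Nonempty) {i : ZMod k} (hi : i ∉ A)
    (a : ZMod k) : dirParent k A i false = a ↔ a ∈ A ∧ Oaf A a i := by
  obtain ⟨c, hc⟩ := hA
  have hci : c ≠ i := fun h => hi (h ▸ hc)
  have hic : i ≠ c := hci.symm
  have hex : ∃ z : ℕ, 0 < z ∧ (i - (z : ZMod k)) ∈ A :=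
    ⟨(i - c).val, val_pos_of_ne hic, by rw [sub_val_sub]; exact hc⟩
  have hdp : dirParent k A i false = i - ((Nat.find hex : ℕ) : ZMod k) := by
    simp only [dirParent, Bool.false_eq_true, if_false, dif_pos hex]
  have hfind := Nat.find_spec hex
  have hfk : Nat.find hex < k :=
    lt_of_le_of_lt (Nat.find_min' hex ⟨val_pos_of_ne hic, by rw [sub_val_sub]; exact hc⟩)
      (ZMod.val_lt _)
  constructor
  · rintro rfl
    have hval : (i - dirParent k A i false).val = Nat.find hex := by
      rw [hdp, sub_sub_cancel, ZMod.val_cast_of_lt hfk]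
    refine ⟨by rw [hdp]; exact hfind.2, ?_⟩
    intro z hz0 hzlt hzA
    rw [hval] at hzlt
    -- position: (dirParent) + z = i - (find - z)
    have hrw : dirParent k A i false + (z : ZMod k) = i - ((Nat.find hex - z : ℕ) : ZMod k) := by
      rw [hdp, Nat.cast_sub hzlt.le]; ring
    rw [hrw] at hzA
    exact Nat.find_min hex (by omega) ⟨by omega, hzA⟩
  · rintro ⟨ha, hoaf⟩
    have hai : a ≠ i := fun h => hi (h ▸ ha)
    have hia : i ≠ a := hai.symm
    have h1 : Nat.find hex ≤ (i - a).val :=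
      Nat.find_min' hex ⟨val_pos_of_ne hia, by rw [sub_val_sub]; exact ha⟩
    have h2 : ¬ Nat.find hex < (i - a).val := by
      intro hlt
      have hmem := hfind.2
      have hrw : i - ((Nat.find hex : ℕ) : ZMod k)
          = a + (((i - a).val - Nat.find hex : ℕ) : ZMod k) := by
        rw [Nat.cast_sub hlt.le]
        have h3 : a + (((i - a).val : ℕ) : ZMod k) = i := add_val_sub a i
        linear_combination -h3
      rw [hrw] at hmem
      exact hoaf _ (by omega) (by omega) hmem
    have : Nat.find hex = (i - a).val := by omega
    rw [hdp, this, sub_val_sub]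




lemma val_add_cases (x y : ZMod k) :
    (x + y).val = x.val + y.val ∨ (x + y).val + k = x.val + y.val := by
  have h := ZMod.val_add x y
  have hx := ZMod.val_lt x; have hy := ZMod.val_lt y
  rcases lt_or_ge (x.val + y.val) k with h1 | h1
  · left; rw [h, Nat.mod_eq_of_lt h1]
  · right; rw [h, Nat.mod_eq_sub_mod h1, Nat.mod_eq_of_lt (by omega)]; omega

lemma oaf_between {A : Finset (ZMod k)} {i j a : ZMod k} (hoafi : Oaf A i a)
    (hlt : (a - j).val < (a - i).val) : Oaf A i j := by
  intro z hz0 hzlt hzA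
  have hval : (j - i).val = (a - i).val - (a - j).val := by
    have h1 : a - (((a - i).val : ℕ) : ZMod k) = i := sub_val_sub a i
    have h2 : a - (((a - j).val : ℕ) : ZMod k) = j := sub_val_sub a j
    have hsub : j - i = (((a - i).val - (a - j).val : ℕ) : ZMod k) := by
      rw [Nat.cast_sub hlt.le]
      linear_combination h1 - h2
    rw [hsub, ZMod.val_cast_of_lt (by have := ZMod.val_lt (a - i); omega)]
  rw [hval] at hzlt
  exact hoafi z hz0 (by omega) hzA

lemma oaf_between' {A : Finset (ZMod k)} {i j a : ZMod k} (hoafj : Oaf A a j)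
    (hlt : (i - a).val < (j - a).val) : Oaf A i j := by
  intro z hz0 hzlt hzA
  have h1 : a + (((i - a).val : ℕ) : ZMod k) = i := add_val_sub a i
  have h2 : a + (((j - a).val : ℕ) : ZMod k) = j := add_val_sub a j
  have hval : (j - i).val = (j - a).val - (i - a).val := by
    have hsub : j - i = (((j - a).val - (i - a).val : ℕ) : ZMod k) := by
      rw [Nat.cast_sub hlt.le]
      linear_combination h1 - h2
    rw [hsub, ZMod.val_cast_of_lt (by have := ZMod.val_lt (j - a); omega)]
  rw [hval] at hzlt
  have hrw : i + ((z : ℕ) : ZMod k) = a + (((i - a).val + z : ℕ) : ZMod k) := by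
    push_cast
    linear_combination -h1
  rw [hrw] at hzA
  exact hoafj _ (by omega) (by omega) hzA

lemma oaf_imp_true_eq {A : Finset (ZMod k)} (hA : A.Nonempty) {i j : ZMod k}
    (hi : i ∉ A) (hj : j ∉ A) (h : Oaf A i j) :
    dirParent k A i true = dirParent k A j true := by
  obtain ⟨ha, hoafj⟩ := (dirParent_true_eq_iff hA hj (dirParent k A j true)).mp rfl
  refine (dirParent_true_eq_iff hA hi _).mpr ⟨ha, ?_⟩
  intro z hz0 hzlt hzA
  set a := dirParent k A j true with hadef
  have hsum : a - i = (a - j) + (j - i) := by ring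
  have hcase := val_add_cases (a - j) (j - i)
  rw [← hsum] at hcase
  rcases hcase with hv | hv
  · rw [hv] at hzlt
    rcases lt_trichotomy z ((j - i).val) with hzd | hzd | hzd
    · exact h z hz0 hzd hzA
    · apply hj; rw [hzd, add_val_sub] at hzA; exact hzA
    · have hrw : i + ((z : ℕ) : ZMod k) = j + ((z - (j - i).val : ℕ) : ZMod k) := by
        rw [Nat.cast_sub hzd.le]
        have h3 : i + (((j - i).val : ℕ) : ZMod k) = j := add_val_sub i j
        linear_combination h3
      rw [hrw] at hzA
      exact hoafj _ (by omega) (by omega) hzA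
  · exfalso
    have hai : a ≠ i := fun hh => hi (hh ▸ ha)
    have hw0 : 0 < (a - i).val := val_pos_of_ne hai
    have hwd : (a - i).val < (j - i).val := by
      have := ZMod.val_lt (a - j); omega
    exact h _ hw0 hwd (by rw [add_val_sub]; exact ha)

lemma oaf_imp_false_eq {A : Finset (ZMod k)} (hA : A.Nonempty) {i j : ZMod k}
    (hi : i ∉ A) (hj : j ∉ A) (h : Oaf A i j) :
    dirParent k A i false = dirParent k A j false := by
  obtain ⟨ha, hoafa⟩ := (dirParent_false_eq_iff hA hi (dirParent k A i false)).mp rfl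
  have key : dirParent k A j false = dirParent k A i false := by
    refine (dirParent_false_eq_iff hA hj _).mpr ⟨ha, ?_⟩
    intro z hz0 hzlt hzA
    set a := dirParent k A i false with hadef
    have h1 : a + (((i - a).val : ℕ) : ZMod k) = i := add_val_sub a i
    have h2 : i + (((j - i).val : ℕ) : ZMod k) = j := add_val_sub i j
    have hsum : j - a = (j - i) + (i - a) := by ring
    have hcase := val_add_cases (j - i) (i - a)
    rw [← hsum] at hcase
    rcases hcase with hv | hv
    · rw [hv] at hzlt
      rcases lt_trichotomy z ((i - a).val) with hzs | hzs | hzs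
      · exact hoafa z hz0 hzs hzA
      · apply hi; rw [hzs, add_val_sub] at hzA; exact hzA
      · have hrw : a + ((z : ℕ) : ZMod k) = i + ((z - (i - a).val : ℕ) : ZMod k) := by
          rw [Nat.cast_sub hzs.le]
          linear_combination h1
        rw [hrw] at hzA
        exact h _ (by omega) (by omega) hzA
    · exfalso
      have haj : a ≠ j := fun hh => hj (hh ▸ ha)
      have hw0 : 0 < (j - a).val := val_pos_of_ne haj.symm
      have hwd : (j - a).val < (j - i).val := by
        have := ZMod.val_lt (i - a); omega
      have h3 : a + (((j - a).val : ℕ) : ZMod k) = j := add_val_sub a j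
      have hrw : a = i + (((j - i).val - (j - a).val : ℕ) : ZMod k) := by
        rw [Nat.cast_sub hwd.le]
        linear_combination h3 - h2
      rw [hrw] at ha
      refine h _ (by omega) (by omega) ha
  exact key.symm

lemma char_tt {A : Finset (ZMod k)} (hcard : 2 ≤ A.card) {i j : ZMod k}
    (hi : i ∉ A) (hj : j ∉ A) (hij : i ≠ j) :
    (dirParent k A i true = dirParent k A j true) ↔ (Oaf A i j ∨ Oaf A j i) := by
  have hA : A.Nonempty := Finset.card_pos.mp (by omega)
  constructor
  · intro h
    obtain ⟨ha, hoafi⟩ := (dirParent_true_eq_iff hA hi _).mp h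
    obtain ⟨_, hoafj⟩ := (dirParent_true_eq_iff hA hj (dirParent k A j true)).mp rfl
    set a := dirParent k A j true with hadef
    have hst : (a - i).val ≠ (a - j).val := by
      intro he
      apply hij
      have h1 : a - (((a - i).val : ℕ) : ZMod k) = i := sub_val_sub a i
      have h2 : a - (((a - j).val : ℕ) : ZMod k) = j := sub_val_sub a j
      rw [← h1, ← h2, he]
    rcases lt_or_gt_of_ne hst with hlt | hlt
    · exact Or.inr (oaf_between hoafj hlt)
    · exact Or.inl (oaf_between hoafi hlt)
  · rintro (h | h)
    · exact oaf_imp_true_eq hA hi hj h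
    · exact (oaf_imp_true_eq hA hj hi h).symm

lemma char_ff {A : Finset (ZMod k)} (hcard : 2 ≤ A.card) {i j : ZMod k}
    (hi : i ∉ A) (hj : j ∉ A) (hij : i ≠ j) :
    (dirParent k A i false = dirParent k A j false) ↔ (Oaf A i j ∨ Oaf A j i) := by
  have hA : A.Nonempty := Finset.card_pos.mp (by omega)
  constructor
  · intro h
    obtain ⟨ha, hoafi⟩ := (dirParent_false_eq_iff hA hi (dirParent k A i false)).mp rfl
    obtain ⟨_, hoafj⟩ := (dirParent_false_eq_iff hA hj _).mp h.symm
    set a := dirParent k A i false with hadef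
    have hst : (i - a).val ≠ (j - a).val := by
      intro he
      apply hij
      have h1 : a + (((i - a).val : ℕ) : ZMod k) = i := add_val_sub a i
      have h2 : a + (((j - a).val : ℕ) : ZMod k) = j := add_val_sub a j
      rw [← h1, ← h2, he]
    rcases lt_or_gt_of_ne hst with hlt | hlt
    · exact Or.inl (oaf_between' hoafj hlt)
    · exact Or.inr (oaf_between' hoafi hlt)
  · rintro (h | h)
    · exact oaf_imp_false_eq hA hi hj h
    · exact (oaf_imp_false_eq hA hj hi h).symm

lemma char_tf {A : Finset (ZMod k)} (hcard : 2 ≤ A.card) {i j : ZMod k}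
    (hi : i ∉ A) (hj : j ∉ A) (hij : i ≠ j) :
    (dirParent k A i true = dirParent k A j false) ↔ OneIn A i j := by
  have hA : A.Nonempty := Finset.card_pos.mp (by omega)
  constructor
  · intro h
    obtain ⟨ha, hoafi⟩ := (dirParent_true_eq_iff hA hi _).mp h
    obtain ⟨_, hoafj⟩ := (dirParent_false_eq_iff hA hj (dirParent k A j false)).mp rfl
    set a := dirParent k A j false with hadef
    have hs0 : 0 < (a - i).val := val_pos_of_ne (fun hh => hi (hh ▸ ha))
    have ht0 : 0 < (j - a).val := val_pos_of_ne (fun hh : j = a => hj (hh ▸ ha))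
    have hd0 : 0 < (j - i).val := val_pos_of_ne hij.symm
    have hsum : j - i = (j - a) + (a - i) := by ring
    have hcase := val_add_cases (j - a) (a - i)
    rw [← hsum] at hcase
    rcases hcase with hv | hv
    · refine ⟨(a - i).val, hs0, by omega, by rw [add_val_sub]; exact ha, ?_⟩
      intro z hz0 hzd hzs hzA
      rcases lt_or_gt_of_ne hzs with hlt | hgt
      · exact hoafi z hz0 hlt hzA
      · have hrw : i + ((z : ℕ) : ZMod k) = a + ((z - (a - i).val : ℕ) : ZMod k) := by
          rw [Nat.cast_sub hgt.le]
          have h1 : i + (((a - i).val : ℕ) : ZMod k) = a := add_val_sub i a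
          linear_combination h1
        rw [hrw] at hzA
        exact hoafj _ (by omega) (by omega) hzA
    · exfalso
      have hone : ∀ x ∈ A, x = a := by
        intro x hx
        by_contra hxa
        have hxi : x ≠ i := fun hh => hi (hh ▸ hx)
        have hw0 : 0 < (x - i).val := val_pos_of_ne hxi
        have hwk : (x - i).val < k := ZMod.val_lt _
        rcases lt_trichotomy ((x - i).val) ((a - i).val) with hlt | heq | hgt
        · exact hoafi _ hw0 hlt (by rw [add_val_sub]; exact hx)
        · apply hxa
          have h1 : i + (((x - i).val : ℕ) : ZMod k) = x := add_val_sub i x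
          have h2 : i + (((a - i).val : ℕ) : ZMod k) = a := add_val_sub i a
          rw [← h1, ← h2, heq]
        · have hrw : x = a + (((x - i).val - (a - i).val : ℕ) : ZMod k) := by
            rw [Nat.cast_sub hgt.le]
            have h1 : i + (((x - i).val : ℕ) : ZMod k) = x := add_val_sub i x
            have h2 : i + (((a - i).val : ℕ) : ZMod k) = a := add_val_sub i a
            linear_combination h2 - h1
          rw [hrw] at hx
          refine hoafj _ (by omega) ?_ hx
          have := ZMod.val_lt (a - i); have := ZMod.val_lt (j - i); omega
      have : A.card ≤ 1 :=
        Finset.card_le_one.mpr (fun x hx y hy => (hone x hx).trans (hone y hy).symm)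
      omega
  · rintro ⟨s, hs0, hsd, hsA, hmin⟩
    have hdk : (j - i).val < k := ZMod.val_lt _
    have hsk : s < k := by omega
    have hval_s : (i + ((s : ℕ) : ZMod k) - i).val = s := by
      rw [add_sub_cancel_left, ZMod.val_cast_of_lt hsk]
    have h1 : dirParent k A i true = i + ((s : ℕ) : ZMod k) := by
      refine (dirParent_true_eq_iff hA hi _).mpr ⟨hsA, ?_⟩
      intro z hz0 hzlt hzA
      rw [hval_s] at hzlt
      exact hmin z hz0 (by omega) (by omega) hzA
    have h2 : dirParent k A j false = i + ((s : ℕ) : ZMod k) := by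
      refine (dirParent_false_eq_iff hA hj _).mpr ⟨hsA, ?_⟩
      intro z hz0 hzlt hzA
      have hvj : (j - (i + ((s : ℕ) : ZMod k))).val = (j - i).val - s := by
        have h3 : i + (((j - i).val : ℕ) : ZMod k) = j := add_val_sub i j
        have hsub : j - (i + ((s : ℕ) : ZMod k)) = (((j - i).val - s : ℕ) : ZMod k) := by
          rw [Nat.cast_sub hsd.le]
          linear_combination -h3
        rw [hsub, ZMod.val_cast_of_lt (by omega)]
      rw [hvj] at hzlt
      have hrw : i + ((s : ℕ) : ZMod k) + ((z : ℕ) : ZMod k) = i + ((s + z : ℕ) : ZMod k) := by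
        push_cast; ring
      rw [hrw] at hzA
      exact hmin (s + z) (by omega) (by omega) (by omega) hzA
    rw [h1, h2]

lemma char_ft {A : Finset (ZMod k)} (hcard : 2 ≤ A.card) {i j : ZMod k}
    (hi : i ∉ A) (hj : j ∉ A) (hij : i ≠ j) :
    (dirParent k A i false = dirParent k A j true) ↔ OneIn A j i := by
  rw [eq_comm]
  exact char_tf hcard hj hi hij.symm

lemma not_oaf_both {A : Finset (ZMod k)} (hcard : 2 ≤ A.card) {i j : ZMod k}
    (hi : i ∉ A) (hj : j ∉ A) (hij : i ≠ j)
    (h1 : Oaf A i j) (h2 : Oaf A j i) : False := by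
  obtain ⟨x, hx⟩ := Finset.card_pos.mp (show 0 < A.card by omega)
  have hxi : x ≠ i := fun hh => hi (hh ▸ hx)
  have hxj : x ≠ j := fun hh => hj (hh ▸ hx)
  have hw0 : 0 < (x - i).val := val_pos_of_ne hxi
  have hd0 : 0 < (j - i).val := val_pos_of_ne hij.symm
  rcases lt_trichotomy ((x - i).val) ((j - i).val) with hlt | heq | hgt
  · exact h1 _ hw0 hlt (by rw [add_val_sub]; exact hx)
  · apply hxj
    have ha1 : i + (((x - i).val : ℕ) : ZMod k) = x := add_val_sub i x
    have ha2 : i + (((j - i).val : ℕ) : ZMod k) = j := add_val_sub i j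
    rw [← ha1, ← ha2, heq]
  · have hneg : (i - j).val = k - (j - i).val := by
      have hh : i - j = -(j - i) := by ring
      rw [hh, ZMod.neg_val', Nat.mod_eq_of_lt (by have := ZMod.val_lt (j - i); omega)]
    have hrw : x = j + (((x - i).val - (j - i).val : ℕ) : ZMod k) := by
      rw [Nat.cast_sub hgt.le]
      have ha1 : i + (((x - i).val : ℕ) : ZMod k) = x := add_val_sub i x
      have ha2 : i + (((j - i).val : ℕ) : ZMod k) = j := add_val_sub i j
      linear_combination ha2 - ha1
    rw [hrw] at hx
    refine h2 _ (by omega) ?_ hx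
    rw [hneg]; have := ZMod.val_lt (x - i); omega




lemma hockey (r : ℕ) : ∀ n : ℕ, ∑ t ∈ Finset.range n, t.choose r = n.choose (r + 1) := by
  intro n
  induction n with
  | zero => simp
  | succ n ih =>
    rw [Finset.sum_range_succ, ih]
    have h : (n + 1).choose (r + 1) = n.choose r + n.choose (r + 1) := by
      simpa [Nat.succ_eq_add_one] using Nat.choose_succ_succ n r
    omega

lemma hockey2 (r : ℕ) : ∀ n : ℕ,
    ∑ t ∈ Finset.range n, (n - 1 - t) * t.choose r = n.choose (r + 2) := by
  intro n
  induction n with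
  | zero => simp
  | succ n ih =>
    have step : ∀ t ∈ Finset.range n,
        (n + 1 - 1 - t) * t.choose r = (n - 1 - t) * t.choose r + t.choose r := by
      intro t ht
      have h := Finset.mem_range.mp ht
      have he : n + 1 - 1 - t = (n - 1 - t) + 1 := by omega
      rw [he, add_mul, one_mul]
    rw [Finset.sum_range_succ, Finset.sum_congr rfl step, Finset.sum_add_distrib, ih,
      hockey r n]
    have h : (n + 1).choose (r + 2) = n.choose (r + 1) + n.choose (r + 2) := by
      simpa [Nat.succ_eq_add_one] using Nat.choose_succ_succ n (r + 1)
    have hz : n + 1 - 1 - n = 0 := by omega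
    rw [hz, zero_mul]
    omega

noncomputable def seg (i0 : ZMod k) (d : ℕ) : Finset (ZMod k) :=
  (Finset.range (d + 1)).image fun z : ℕ => i0 + (z : ZMod k)

lemma mem_seg {i0 : ZMod k} {d : ℕ} {x : ZMod k} :
    x ∈ seg i0 d ↔ ∃ z : ℕ, z ≤ d ∧ x = i0 + (z : ZMod k) := by
  simp only [seg, Finset.mem_image, Finset.mem_range, Nat.lt_succ_iff]
  constructor
  · rintro ⟨z, h1, h2⟩; exact ⟨z, h1, h2.symm⟩
  · rintro ⟨z, h1, h2⟩; exact ⟨z, h1, h2.symm⟩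

lemma seg_card {i0 : ZMod k} {d : ℕ} (hd : d < k) : (seg i0 d).card = d + 1 := by
  rw [seg, Finset.card_image_of_injOn, Finset.card_range]
  intro z1 h1 z2 h2 he
  simp only [Finset.coe_range, Set.mem_Iio] at h1 h2
  have he2 : ((z1 : ℕ) : ZMod k) = ((z2 : ℕ) : ZMod k) := by
    have := he
    simpa using add_left_cancel this
  have := congrArg ZMod.val he2
  rwa [ZMod.val_cast_of_lt (by omega), ZMod.val_cast_of_lt (by omega)] at this

lemma count_A_avoid (m : ℕ) (S : Finset (ZMod k)) :
    ((Finset.univ : Finset (Finset (ZMod k))).filter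
      fun A => A.card = m ∧ ∀ x ∈ S, x ∉ A).card = (k - S.card).choose m := by
  have he : ((Finset.univ : Finset (Finset (ZMod k))).filter
      fun A => A.card = m ∧ ∀ x ∈ S, x ∉ A) = Sᶜ.powersetCard m := by
    ext A
    simp only [Finset.mem_filter, Finset.mem_univ, true_and, Finset.mem_powersetCard]
    constructor
    · rintro ⟨hc, hav⟩
      exact ⟨fun x hx => Finset.mem_compl.mpr (fun hxS => hav x hxS hx), hc⟩
    · rintro ⟨hsub, hc⟩
      exact ⟨hc, fun x hxS hxA => Finset.mem_compl.mp (hsub hxA) hxS⟩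
  rw [he, Finset.card_powersetCard, Finset.card_compl, ZMod.card]

lemma count_A_in_avoid (m : ℕ) (hm : 1 ≤ m) (S : Finset (ZMod k)) {x0 : ZMod k} (hx0 : x0 ∈ S) :
    ((Finset.univ : Finset (Finset (ZMod k))).filter
      fun A => A.card = m ∧ x0 ∈ A ∧ ∀ x ∈ S, x ≠ x0 → x ∉ A).card
      = (k - S.card).choose (m - 1) := by
  have he : ((Finset.univ : Finset (Finset (ZMod k))).filter
      fun A => A.card = m ∧ x0 ∈ A ∧ ∀ x ∈ S, x ≠ x0 → x ∉ A).card
      = (Sᶜ.powersetCard (m - 1)).card := by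
    apply Finset.card_nbij' (fun A => A.erase x0) (fun B => insert x0 B)
    · intro A hA
      simp only [Finset.mem_coe, Finset.mem_filter, Finset.mem_univ, true_and] at hA
      obtain ⟨hc, hx0A, hav⟩ := hA
      rw [Finset.mem_coe, Finset.mem_powersetCard]
      refine ⟨?_, by rw [Finset.card_erase_of_mem hx0A, hc]⟩
      intro y hy
      rw [Finset.mem_erase] at hy
      rw [Finset.mem_compl]
      intro hyS
      exact hav y hyS hy.1 hy.2
    · intro B hB
      rw [Finset.mem_coe, Finset.mem_powersetCard] at hB
      obtain ⟨hsub, hc⟩ := hB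
      have hx0B : x0 ∉ B := fun hh => Finset.mem_compl.mp (hsub hh) hx0
      simp only [Finset.mem_coe, Finset.mem_filter, Finset.mem_univ, true_and]
      refine ⟨by rw [Finset.card_insert_of_notMem hx0B, hc]; omega,
        Finset.mem_insert_self _ _, ?_⟩
      intro x hxS hxne
      rw [Finset.mem_insert]
      push_neg
      exact ⟨hxne, fun hh => Finset.mem_compl.mp (hsub hh) hxS⟩
    · intro A hA
      simp only [Finset.mem_coe, Finset.mem_filter, Finset.mem_univ, true_and] at hA
      exact Finset.insert_erase hA.2.1
    · intro B hB
      rw [Finset.mem_coe, Finset.mem_powersetCard] at hB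
      exact Finset.erase_insert (fun hh => Finset.mem_compl.mp (hB.1 hh) hx0)
  rw [he, Finset.card_powersetCard, Finset.card_compl, ZMod.card]

def base (m : ℕ) (q : Finset (ZMod k) × ZMod k × ZMod k) : Prop :=
  q.1.card = m ∧ q.2.1 ∉ q.1 ∧ q.2.2 ∉ q.1 ∧ q.2.1 ≠ q.2.2

lemma cast_ne_zero_of {d : ℕ} (h0 : 0 < d) (hk : d < k) : ((d : ℕ) : ZMod k) ≠ 0 := by
  intro h
  have hdvd := (ZMod.natCast_eq_zero_iff d k).mp h
  have := Nat.le_of_dvd h0 hdvd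
  omega

lemma sum_Ico_reindex (f : ℕ → ℕ) :
    ∑ d ∈ Finset.Ico 1 k, f (k - 1 - d) = ∑ t ∈ Finset.range (k - 1), f t := by
  apply Finset.sum_nbij' (fun d => k - 1 - d) (fun t => k - 1 - t)
  · intro d hd
    rw [Finset.mem_Ico] at hd
    rw [Finset.mem_range]
    omega
  · intro t ht
    rw [Finset.mem_range] at ht
    rw [Finset.mem_Ico]
    omega
  · intro d hd
    rw [Finset.mem_Ico] at hd
    omega
  · intro t ht
    rw [Finset.mem_range] at ht
    omega
  · intro d _
    rfl

lemma count_oaf (m : ℕ) :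
    ((Finset.univ : Finset (Finset (ZMod k) × ZMod k × ZMod k)).filter fun q =>
        base m q ∧ Oaf q.1 q.2.1 q.2.2).card = k * (k - 1).choose (m + 1) := by
  have hmapsto : ∀ q ∈ ((Finset.univ : Finset (Finset (ZMod k) × ZMod k × ZMod k)).filter fun q =>
      base m q ∧ Oaf q.1 q.2.1 q.2.2),
      (fun q : Finset (ZMod k) × ZMod k × ZMod k => (q.2.1, (q.2.2 - q.2.1).val)) q
        ∈ (Finset.univ : Finset (ZMod k)) ×ˢ Finset.Ico 1 k := by
    rintro ⟨A, i, j⟩ hq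
    simp only [Finset.mem_filter, Finset.mem_univ, true_and] at hq
    obtain ⟨⟨hc, hi, hj, hij⟩, -⟩ := hq
    simp only [Finset.mem_product, Finset.mem_univ, Finset.mem_Ico, true_and]
    exact ⟨val_pos_of_ne hij.symm, ZMod.val_lt _⟩
  rw [Finset.card_eq_sum_card_fiberwise hmapsto]
  have hfib : ∀ p ∈ (Finset.univ : Finset (ZMod k)) ×ˢ Finset.Ico 1 k,
      (((Finset.univ : Finset (Finset (ZMod k) × ZMod k × ZMod k)).filter fun q =>
          base m q ∧ Oaf q.1 q.2.1 q.2.2).filter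
        fun q => (q.2.1, (q.2.2 - q.2.1).val) = p).card = (k - (p.2 + 1)).choose m := by
    rintro ⟨i0, d⟩ hp
    simp only [Finset.mem_product, Finset.mem_Ico, Finset.mem_univ, true_and] at hp
    obtain ⟨hd1, hdk⟩ := hp
    have hcast : ((d : ℕ) : ZMod k) ≠ 0 := cast_ne_zero_of hd1 hdk
    rw [show (k - (d + 1)).choose m = (k - (seg i0 d).card).choose m by rw [seg_card hdk],
      ← count_A_avoid m (seg i0 d)]
    apply Finset.card_nbij' (fun q => q.1)
      (fun B => (B, i0, i0 + ((d : ℕ) : ZMod k)))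
    · rintro ⟨A, i, j⟩ hq
      simp only [Finset.mem_coe, Finset.mem_filter, Finset.mem_univ, true_and, Prod.mk.injEq] at hq
      obtain ⟨⟨⟨hc, hi, hj, hij⟩, hoaf⟩, h1, h2⟩ := hq
      simp only [Finset.mem_coe, Finset.mem_filter, Finset.mem_univ, true_and]
      refine ⟨hc, ?_⟩
      intro x hx
      obtain ⟨z, hzd, rfl⟩ := mem_seg.mp hx
      subst h1
      rcases Nat.eq_zero_or_pos z with rfl | hz0
      · simpa using hi
      rcases eq_or_lt_of_le hzd with rfl | hzlt
      · rw [← h2, add_val_sub]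
        exact hj
      · exact hoaf z hz0 (by omega) 
    · intro B hB
      simp only [Finset.mem_coe, Finset.mem_filter, Finset.mem_univ, true_and] at hB
      obtain ⟨hc, hav⟩ := hB
      have hi0 : i0 ∈ seg i0 d := mem_seg.mpr ⟨0, by omega, by simp⟩
      have hid : i0 + ((d : ℕ) : ZMod k) ∈ seg i0 d := mem_seg.mpr ⟨d, le_refl d, rfl⟩
      have hvd : ((i0 + ((d : ℕ) : ZMod k)) - i0).val = d := by
        rw [add_sub_cancel_left, ZMod.val_cast_of_lt hdk]
      simp only [Finset.mem_coe, Finset.mem_filter, Finset.mem_univ, true_and, Prod.mk.injEq]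
      refine ⟨⟨⟨hc, hav _ hi0, hav _ hid, fun hh => hcast (left_eq_add.mp hh)⟩, ?_⟩,
        hvd⟩
      intro z hz0 hzlt hzA
      rw [hvd] at hzlt
      exact hav _ (mem_seg.mpr ⟨z, by omega, rfl⟩) hzA
    · rintro ⟨A, i, j⟩ hq
      simp only [Finset.mem_coe, Finset.mem_filter, Finset.mem_univ, true_and, Prod.mk.injEq] at hq
      obtain ⟨-, h1, h2⟩ := hq
      subst h1
      rw [← h2, add_val_sub]
    · intro B _
      rfl
  rw [Finset.sum_congr rfl hfib, Finset.sum_product]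
  have hinner : ∀ i0 : ZMod k,
      ∑ d ∈ Finset.Ico 1 k, (k - ((i0, d).2 + 1)).choose m = (k - 1).choose (m + 1) := by
    intro i0
    have : ∀ d ∈ Finset.Ico 1 k, (k - (d + 1)).choose m = (k - 1 - d).choose m := by
      intro d hd
      rw [Finset.mem_Ico] at hd
      congr 1
      omega
    rw [Finset.sum_congr rfl this, sum_Ico_reindex (fun t => t.choose m), hockey]
  rw [Finset.sum_congr rfl (fun i0 _ => hinner i0), Finset.sum_const, Finset.card_univ,
    ZMod.card, smul_eq_mul]


lemma oneIn_dirParent {A : Finset (ZMod k)} {i j : ZMod k} (hi : i ∉ A) {s : ℕ}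
    (hs0 : 0 < s) (hsd : s < (j - i).val) (hsA : i + (s : ZMod k) ∈ A)
    (hmin : ∀ z : ℕ, 0 < z → z < (j - i).val → z ≠ s → i + (z : ZMod k) ∉ A) :
    dirParent k A i true = i + (s : ZMod k) := by
  have hA : A.Nonempty := ⟨_, hsA⟩
  have hsk : s < k := lt_trans hsd (ZMod.val_lt _)
  refine (dirParent_true_eq_iff hA hi _).mpr ⟨hsA, ?_⟩
  intro z hz0 hzlt hzA
  rw [add_sub_cancel_left, ZMod.val_cast_of_lt hsk] at hzlt
  exact hmin z hz0 (by omega) (by omega) hzA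

lemma card_filter_congr' {α : Type*} (p q : α → Prop) (ip : DecidablePred p)
    (iq : DecidablePred q) (h : ∀ a, p a ↔ q a) (s : Finset α) :
    (@Finset.filter α p ip s).card = (@Finset.filter α q iq s).card := by
  congr 1
  ext a
  rw [@Finset.mem_filter _ _ ip, @Finset.mem_filter _ _ iq]
  exact and_congr_right (fun _ => h a)

lemma count_base (m : ℕ) :
    ((Finset.univ : Finset (Finset (ZMod k) × ZMod k × ZMod k)).filter fun q =>
        base m q).card = k * ((k - 1) * (k - 2).choose m) := by
  have hmapsto : ∀ q ∈ ((Finset.univ : Finset (Finset (ZMod k) × ZMod k × ZMod k)).filter fun q =>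
      base m q),
      (fun q : Finset (ZMod k) × ZMod k × ZMod k => (q.2.1, (q.2.2 - q.2.1).val)) q
        ∈ (Finset.univ : Finset (ZMod k)) ×ˢ Finset.Ico 1 k := by
    rintro ⟨A, i, j⟩ hq
    simp only [Finset.mem_filter, Finset.mem_univ, true_and] at hq
    obtain ⟨hc, hi, hj, hij⟩ := hq
    simp only [Finset.mem_product, Finset.mem_univ, Finset.mem_Ico, true_and]
    exact ⟨val_pos_of_ne hij.symm, ZMod.val_lt _⟩
  rw [Finset.card_eq_sum_card_fiberwise hmapsto]
  have hfib : ∀ p ∈ (Finset.univ : Finset (ZMod k)) ×ˢ Finset.Ico 1 k,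
      (((Finset.univ : Finset (Finset (ZMod k) × ZMod k × ZMod k)).filter fun q =>
          base m q).filter
        fun q => (q.2.1, (q.2.2 - q.2.1).val) = p).card = (k - 2).choose m := by
    rintro ⟨i0, d⟩ hp
    simp only [Finset.mem_product, Finset.mem_Ico, Finset.mem_univ, true_and] at hp
    obtain ⟨hd1, hdk⟩ := hp
    have hcast : ((d : ℕ) : ZMod k) ≠ 0 := cast_ne_zero_of hd1 hdk
    have hne : i0 ≠ i0 + ((d : ℕ) : ZMod k) := fun hh => hcast (left_eq_add.mp hh)
    have hS : (insert i0 {i0 + ((d : ℕ) : ZMod k)} : Finset (ZMod k)).card = 2 := by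
      rw [Finset.card_insert_of_notMem (by simpa using hne), Finset.card_singleton]
    rw [show (k - 2).choose m
        = (k - (insert i0 {i0 + ((d : ℕ) : ZMod k)} : Finset (ZMod k)).card).choose m by
          rw [hS],
      ← count_A_avoid m _]
    apply Finset.card_nbij' (fun q => q.1)
      (fun B => (B, i0, i0 + ((d : ℕ) : ZMod k)))
    · rintro ⟨A, i, j⟩ hq
      simp only [Finset.mem_coe, Finset.mem_filter, Finset.mem_univ, true_and, Prod.mk.injEq] at hq
      obtain ⟨⟨hc, hi, hj, hij⟩, h1, h2⟩ := hq
      subst h1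
      simp only [Finset.mem_coe, Finset.mem_filter, Finset.mem_univ, true_and]
      refine ⟨hc, ?_⟩
      intro x hx
      rcases Finset.mem_insert.mp hx with rfl | hx2
      · exact hi
      · rw [Finset.mem_singleton] at hx2
        subst hx2
        rw [← h2, add_val_sub]
        exact hj
    · intro B hB
      simp only [Finset.mem_coe, Finset.mem_filter, Finset.mem_univ, true_and] at hB
      obtain ⟨hc, hav⟩ := hB
      have hvd : ((i0 + ((d : ℕ) : ZMod k)) - i0).val = d := by
        rw [add_sub_cancel_left, ZMod.val_cast_of_lt hdk]
      simp only [Finset.mem_coe, Finset.mem_filter, Finset.mem_univ, true_and, Prod.mk.injEq]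
      exact ⟨⟨hc, hav _ (Finset.mem_insert_self _ _),
        hav _ (Finset.mem_insert.mpr (Or.inr (Finset.mem_singleton_self _))), hne⟩, hvd⟩
    · rintro ⟨A, i, j⟩ hq
      simp only [Finset.mem_coe, Finset.mem_filter, Finset.mem_univ, true_and, Prod.mk.injEq] at hq
      obtain ⟨-, h1, h2⟩ := hq
      subst h1
      rw [← h2, add_val_sub]
    · intro B _
      rfl
  rw [Finset.sum_congr rfl hfib, Finset.sum_product]
  have hinner : ∀ i0 : ZMod k,
      ∑ _d ∈ Finset.Ico 1 k, (k - 2).choose m = (k - 1) * (k - 2).choose m := by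
    intro i0
    rw [Finset.sum_const, Nat.card_Ico, smul_eq_mul]
  rw [Finset.sum_congr rfl (fun i0 _ => hinner i0), Finset.sum_const, Finset.card_univ,
    ZMod.card, smul_eq_mul]

lemma count_oneIn (m : ℕ) (hm : 1 ≤ m) :
    ((Finset.univ : Finset (Finset (ZMod k) × ZMod k × ZMod k)).filter fun q =>
        base m q ∧ OneIn q.1 q.2.1 q.2.2).card = k * (k - 1).choose (m + 1) := by
  have hmapsto : ∀ q ∈ ((Finset.univ : Finset (Finset (ZMod k) × ZMod k × ZMod k)).filter fun q =>
      base m q ∧ OneIn q.1 q.2.1 q.2.2),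
      (fun q : Finset (ZMod k) × ZMod k × ZMod k =>
        (q.2.1, (q.2.2 - q.2.1).val, (dirParent k q.1 q.2.1 true - q.2.1).val)) q
        ∈ (Finset.univ : Finset (ZMod k)) ×ˢ
          ((Finset.Ico 1 k ×ˢ Finset.Ico 1 k).filter fun r => r.2 < r.1) := by
    rintro ⟨A, i, j⟩ hq
    simp only [Finset.mem_filter, Finset.mem_univ, true_and] at hq
    obtain ⟨⟨hc, hi, hj, hij⟩, s, hs0, hsd, hsA, hmin⟩ := hq
    have hdk : (j - i).val < k := ZMod.val_lt _
    have hsk : s < k := by omega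
    have hdp : dirParent k A i true = i + (s : ZMod k) := oneIn_dirParent hi hs0 hsd hsA hmin
    simp only [Finset.mem_product, Finset.mem_univ, Finset.mem_filter, Finset.mem_Ico, true_and]
    rw [hdp, add_sub_cancel_left, ZMod.val_cast_of_lt hsk]
    exact ⟨⟨⟨by omega, hdk⟩, by omega, hsk⟩, by omega⟩
  rw [Finset.card_eq_sum_card_fiberwise hmapsto]
  have hfib : ∀ p ∈ (Finset.univ : Finset (ZMod k)) ×ˢ
      ((Finset.Ico 1 k ×ˢ Finset.Ico 1 k).filter fun r => r.2 < r.1),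
      (((Finset.univ : Finset (Finset (ZMod k) × ZMod k × ZMod k)).filter fun q =>
          base m q ∧ OneIn q.1 q.2.1 q.2.2).filter
        fun q => (q.2.1, (q.2.2 - q.2.1).val, (dirParent k q.1 q.2.1 true - q.2.1).val) = p).card
        = (k - (p.2.1 + 1)).choose (m - 1) := by
    rintro ⟨i0, d, s⟩ hp
    simp only [Finset.mem_product, Finset.mem_filter, Finset.mem_Ico, Finset.mem_univ,
      true_and] at hp
    obtain ⟨⟨⟨hd1, hdk⟩, hs1, hsk⟩, hsd⟩ := hp
    have hcastd : ((d : ℕ) : ZMod k) ≠ 0 := cast_ne_zero_of hd1 hdk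
    have hcasts : ((s : ℕ) : ZMod k) ≠ 0 := cast_ne_zero_of hs1 hsk
    have hx0 : i0 + ((s : ℕ) : ZMod k) ∈ seg i0 d := mem_seg.mpr ⟨s, by omega, rfl⟩
    have hdsne : i0 + ((d : ℕ) : ZMod k) ≠ i0 + ((s : ℕ) : ZMod k) := by
      intro hh
      have h2 := add_left_cancel hh
      have h3 := congrArg ZMod.val h2
      rw [ZMod.val_cast_of_lt hdk, ZMod.val_cast_of_lt hsk] at h3
      omega
    rw [show (k - (d + 1)).choose (m - 1) = (k - (seg i0 d).card).choose (m - 1) by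
        rw [seg_card hdk],
      ← count_A_in_avoid m hm (seg i0 d) hx0]
    apply Finset.card_nbij' (fun q => q.1)
      (fun B => (B, i0, i0 + ((d : ℕ) : ZMod k)))
    · rintro ⟨A, i, j⟩ hq
      simp only [Finset.mem_coe, Finset.mem_filter, Finset.mem_univ, true_and, Prod.mk.injEq] at hq
      obtain ⟨⟨⟨hc, hi, hj, hij⟩, st, hst0, hstd, hstA, hstmin⟩, h1, h2, h3⟩ := hq
      subst h1
      have hdp : dirParent k A i true = i + (st : ZMod k) :=
        oneIn_dirParent hi hst0 hstd hstA hstmin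
      have hstk : st < k := lt_trans hstd (ZMod.val_lt _)
      rw [hdp, add_sub_cancel_left, ZMod.val_cast_of_lt hstk] at h3
      subst h3
      simp only [Finset.mem_coe, Finset.mem_filter, Finset.mem_univ, true_and]
      refine ⟨hc, hstA, ?_⟩
      intro x hx hxne
      obtain ⟨z, hzd, rfl⟩ := mem_seg.mp hx
      rcases Nat.eq_zero_or_pos z with rfl | hz0
      · simpa using hi
      rcases eq_or_lt_of_le hzd with rfl | hzlt
      · rw [← h2, add_val_sub]
        exact hj
      · have hzs : z ≠ st := fun hh => hxne (by rw [hh])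
        exact hstmin z hz0 (by omega) hzs
    · intro B hB
      simp only [Finset.mem_coe, Finset.mem_filter, Finset.mem_univ, true_and] at hB
      obtain ⟨hc, hx0B, hav⟩ := hB
      have hvd : ((i0 + ((d : ℕ) : ZMod k)) - i0).val = d := by
        rw [add_sub_cancel_left, ZMod.val_cast_of_lt hdk]
      have hi0 : i0 ∉ B := hav i0 (mem_seg.mpr ⟨0, by omega, by simp⟩)
        (fun hh => hcasts (left_eq_add.mp hh))
      have hj0 : i0 + ((d : ℕ) : ZMod k) ∉ B :=
        hav _ (mem_seg.mpr ⟨d, le_refl d, rfl⟩) hdsne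
      have hmin2 : ∀ z : ℕ, 0 < z → z < ((i0 + ((d : ℕ) : ZMod k)) - i0).val → z ≠ s →
          i0 + (z : ZMod k) ∉ B := by
        intro z hz0 hzlt hzs
        rw [hvd] at hzlt
        refine hav _ (mem_seg.mpr ⟨z, by omega, rfl⟩) ?_
        intro hh
        have h2 := add_left_cancel hh
        have h3 := congrArg ZMod.val h2
        rw [ZMod.val_cast_of_lt (by omega : z < k), ZMod.val_cast_of_lt hsk] at h3
        exact hzs h3
      have hOneIn : OneIn B i0 (i0 + ((d : ℕ) : ZMod k)) :=
        ⟨s, hs1, by rw [hvd]; omega, hx0B, hmin2⟩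
      have hdp : dirParent k B i0 true = i0 + (s : ZMod k) :=
        oneIn_dirParent hi0 hs1 (by rw [hvd]; omega) hx0B hmin2
      simp only [Finset.mem_coe, Finset.mem_filter, Finset.mem_univ, true_and, Prod.mk.injEq]
      refine ⟨⟨⟨hc, hi0, hj0, fun hh => hcastd (left_eq_add.mp hh)⟩, hOneIn⟩, hvd, ?_⟩
      rw [hdp, add_sub_cancel_left, ZMod.val_cast_of_lt hsk]
    · rintro ⟨A, i, j⟩ hq
      simp only [Finset.mem_coe, Finset.mem_filter, Finset.mem_univ, true_and, Prod.mk.injEq] at hq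
      obtain ⟨-, h1, h2, -⟩ := hq
      subst h1
      rw [← h2, add_val_sub]
    · intro B _
      rfl
  rw [Finset.sum_congr rfl hfib, Finset.sum_product]
  have hW : ∑ r ∈ (Finset.Ico 1 k ×ˢ Finset.Ico 1 k).filter (fun r => r.2 < r.1),
      (k - (r.1 + 1)).choose (m - 1) = (k - 1).choose (m + 1) := by
    rw [Finset.sum_filter, Finset.sum_product]
    have hinner : ∀ d ∈ Finset.Ico 1 k,
        (∑ s ∈ Finset.Ico 1 k, if s < d then (k - (d + 1)).choose (m - 1) else 0)
          = (d - 1) * (k - (d + 1)).choose (m - 1) := by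
      intro d hd
      rw [Finset.mem_Ico] at hd
      rw [← Finset.sum_filter]
      have he : (Finset.Ico 1 k).filter (fun s => s < d) = Finset.Ico 1 d := by
        ext s
        simp only [Finset.mem_filter, Finset.mem_Ico]
        omega
      rw [he, Finset.sum_const, Nat.card_Ico, smul_eq_mul]
    rw [Finset.sum_congr rfl hinner]
    have hcongr : ∀ d ∈ Finset.Ico 1 k,
        (d - 1) * (k - (d + 1)).choose (m - 1)
          = (k - 1 - 1 - (k - 1 - d)) * (k - 1 - d).choose (m - 1) := by
      intro d hd
      rw [Finset.mem_Ico] at hd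
      have e1 : k - 1 - 1 - (k - 1 - d) = d - 1 := by omega
      have e2 : k - (d + 1) = k - 1 - d := by omega
      rw [e1, e2]
    rw [Finset.sum_congr rfl hcongr,
      sum_Ico_reindex (fun t => (k - 1 - 1 - t) * t.choose (m - 1))]
    have h := hockey2 (m - 1) (k - 1)
    rw [show m - 1 + 2 = m + 1 by omega] at h
    exact h
  rw [Finset.sum_congr rfl (fun i0 _ => hW), Finset.sum_const, Finset.card_univ,
    ZMod.card, smul_eq_mul]

lemma count_swap (m : ℕ) (P : Finset (ZMod k) → ZMod k → ZMod k → Prop) :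
    ((Finset.univ : Finset (Finset (ZMod k) × ZMod k × ZMod k)).filter fun q =>
        base m q ∧ P q.1 q.2.2 q.2.1).card
      = ((Finset.univ : Finset (Finset (ZMod k) × ZMod k × ZMod k)).filter fun q =>
        base m q ∧ P q.1 q.2.1 q.2.2).card := by
  apply Finset.card_nbij' (fun q => (q.1, q.2.2, q.2.1)) (fun q => (q.1, q.2.2, q.2.1))
  · rintro ⟨A, i, j⟩ hq
    simp only [Finset.mem_coe, Finset.mem_filter, Finset.mem_univ, true_and] at hq ⊢
    simp only [base] at hq ⊢
    obtain ⟨⟨hc, hi, hj, hij⟩, hP⟩ := hq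
    exact ⟨⟨hc, hj, hi, hij.symm⟩, hP⟩
  · rintro ⟨A, i, j⟩ hq
    simp only [Finset.mem_coe, Finset.mem_filter, Finset.mem_univ, true_and] at hq ⊢
    simp only [base] at hq ⊢
    obtain ⟨⟨hc, hi, hj, hij⟩, hP⟩ := hq
    exact ⟨⟨hc, hj, hi, hij.symm⟩, hP⟩
  · rintro ⟨A, i, j⟩ _
    rfl
  · rintro ⟨A, i, j⟩ _
    rfl

lemma bits_split (P : Finset (ZMod k) × ZMod k × ZMod k → Bool → Bool → Prop)
    [D0 : DecidablePred fun p : Finset (ZMod k) × ZMod k × ZMod k × Bool × Bool =>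
      P (p.1, p.2.1, p.2.2.1) p.2.2.2.1 p.2.2.2.2]
    [D1 : DecidablePred fun q : Finset (ZMod k) × ZMod k × ZMod k => P q true true]
    [D2 : DecidablePred fun q : Finset (ZMod k) × ZMod k × ZMod k => P q true false]
    [D3 : DecidablePred fun q : Finset (ZMod k) × ZMod k × ZMod k => P q false true]
    [D4 : DecidablePred fun q : Finset (ZMod k) × ZMod k × ZMod k => P q false false] :
    ((Finset.univ : Finset (Finset (ZMod k) × ZMod k × ZMod k × Bool × Bool)).filter fun p =>
        P (p.1, p.2.1, p.2.2.1) p.2.2.2.1 p.2.2.2.2).card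
      = ((Finset.univ : Finset (Finset (ZMod k) × ZMod k × ZMod k)).filter
          fun q => P q true true).card
        + ((Finset.univ : Finset (Finset (ZMod k) × ZMod k × ZMod k)).filter
          fun q => P q true false).card
        + ((Finset.univ : Finset (Finset (ZMod k) × ZMod k × ZMod k)).filter
          fun q => P q false true).card
        + ((Finset.univ : Finset (Finset (ZMod k) × ZMod k × ZMod k)).filter
          fun q => P q false false).card := by
  have hmapsto : ∀ p ∈ ((Finset.univ :
      Finset (Finset (ZMod k) × ZMod k × ZMod k × Bool × Bool)).filter fun p =>
        P (p.1, p.2.1, p.2.2.1) p.2.2.2.1 p.2.2.2.2),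
      (fun p : Finset (ZMod k) × ZMod k × ZMod k × Bool × Bool =>
        (p.2.2.2.1, p.2.2.2.2)) p ∈ (Finset.univ : Finset (Bool × Bool)) :=
    fun _ _ => Finset.mem_univ _
  rw [Finset.card_eq_sum_card_fiberwise hmapsto]
  have hslice : ∀ (b1 b2 : Bool) (inst : DecidablePred fun q : Finset (ZMod k) × ZMod k × ZMod k => P q b1 b2),
      (((Finset.univ : Finset (Finset (ZMod k) × ZMod k × ZMod k × Bool × Bool)).filter fun p =>
        P (p.1, p.2.1, p.2.2.1) p.2.2.2.1 p.2.2.2.2).filter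
          fun p => (p.2.2.2.1, p.2.2.2.2) = (b1, b2)).card
        = (@Finset.filter _ (fun q : Finset (ZMod k) × ZMod k × ZMod k => P q b1 b2) inst
            Finset.univ).card := by
    intro b1 b2 inst
    apply Finset.card_nbij' (fun p => (p.1, p.2.1, p.2.2.1))
      (fun q => (q.1, q.2.1, q.2.2, b1, b2))
    · rintro ⟨A, i, j, c1, c2⟩ hp
      simp only [Finset.mem_coe, Finset.mem_filter, Finset.mem_univ, true_and, Prod.mk.injEq] at hp ⊢
      obtain ⟨hP, h1, h2⟩ := hp
      subst h1; subst h2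
      exact hP
    · rintro ⟨A, i, j⟩ hq
      simp only [Finset.mem_coe, Finset.mem_filter, Finset.mem_univ, true_and, Prod.mk.injEq] at hq ⊢
      exact ⟨hq, trivial⟩
    · rintro ⟨A, i, j, c1, c2⟩ hp
      simp only [Finset.mem_coe, Finset.mem_filter, Finset.mem_univ, true_and, Prod.mk.injEq] at hp
      obtain ⟨-, h1, h2⟩ := hp
      subst h1; subst h2
      rfl
    · rintro ⟨A, i, j⟩ _
      rfl
  rw [Fintype.sum_prod_type]
  simp only [Fintype.sum_bool]
  rw [hslice true true D1, hslice true false D2, hslice false true D3, hslice false false D4]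
  omega

end SameParent

open SameParent in
theorem same_random_dir_parent_prob (k m : ℕ) [NeZero k] (hm : 2 ≤ m) (hk : m + 2 ≤ k) :
    (((Finset.univ : Finset (Finset (ZMod k) × ZMod k × ZMod k × Bool × Bool)).filter fun p =>
        p.1.card = m ∧ p.2.1 ∉ p.1 ∧ p.2.2.1 ∉ p.1 ∧ p.2.1 ≠ p.2.2.1 ∧
        dirParent k p.1 p.2.1 p.2.2.2.1 = dirParent k p.1 p.2.2.1 p.2.2.2.2).card : ℝ) /
      (((Finset.univ : Finset (Finset (ZMod k) × ZMod k × ZMod k × Bool × Bool)).filter fun p =>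
        p.1.card = m ∧ p.2.1 ∉ p.1 ∧ p.2.2.1 ∉ p.1 ∧ p.2.1 ≠ p.2.2.1).card : ℝ) =
    1.5 / ((m : ℝ) + 1) := by
  have hkpos : 0 < k := NeZero.pos k
  have hCpos : 0 < (k - 1).choose (m + 1) := Nat.choose_pos (by omega)
  -- the four slice values
  have htt : ((Finset.univ : Finset (Finset (ZMod k) × ZMod k × ZMod k)).filter fun q =>
      q.1.card = m ∧ q.2.1 ∉ q.1 ∧ q.2.2 ∉ q.1 ∧ q.2.1 ≠ q.2.2 ∧
      dirParent k q.1 q.2.1 true = dirParent k q.1 q.2.2 true).card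
      = 2 * (k * (k - 1).choose (m + 1)) := by
    have he : ((Finset.univ : Finset (Finset (ZMod k) × ZMod k × ZMod k)).filter fun q =>
        q.1.card = m ∧ q.2.1 ∉ q.1 ∧ q.2.2 ∉ q.1 ∧ q.2.1 ≠ q.2.2 ∧
        dirParent k q.1 q.2.1 true = dirParent k q.1 q.2.2 true)
        = ((Finset.univ : Finset (Finset (ZMod k) × ZMod k × ZMod k)).filter fun q =>
          base m q ∧ (Oaf q.1 q.2.1 q.2.2 ∨ Oaf q.1 q.2.2 q.2.1)) := by
      apply Finset.filter_congr
      rintro ⟨A, i, j⟩ -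
      simp only [base]
      constructor
      · rintro ⟨hc, hi, hj, hij, heq⟩
        exact ⟨⟨hc, hi, hj, hij⟩, (char_tt (by omega) hi hj hij).mp heq⟩
      · rintro ⟨⟨hc, hi, hj, hij⟩, hor⟩
        exact ⟨hc, hi, hj, hij, (char_tt (by omega) hi hj hij).mpr hor⟩
    rw [he]
    have hsplit : ((Finset.univ : Finset (Finset (ZMod k) × ZMod k × ZMod k)).filter fun q =>
        base m q ∧ (Oaf q.1 q.2.1 q.2.2 ∨ Oaf q.1 q.2.2 q.2.1))
        = ((Finset.univ : Finset (Finset (ZMod k) × ZMod k × ZMod k)).filter fun q =>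
            base m q ∧ Oaf q.1 q.2.1 q.2.2)
          ∪ ((Finset.univ : Finset (Finset (ZMod k) × ZMod k × ZMod k)).filter fun q =>
            base m q ∧ Oaf q.1 q.2.2 q.2.1) := by
      ext q
      simp only [Finset.mem_filter, Finset.mem_union, Finset.mem_univ, true_and]
      tauto
    have hdisj : Disjoint
        ((Finset.univ : Finset (Finset (ZMod k) × ZMod k × ZMod k)).filter fun q =>
          base m q ∧ Oaf q.1 q.2.1 q.2.2)
        ((Finset.univ : Finset (Finset (ZMod k) × ZMod k × ZMod k)).filter fun q =>
          base m q ∧ Oaf q.1 q.2.2 q.2.1) := by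
      rw [Finset.disjoint_left]
      rintro ⟨A, i, j⟩ h1 h2
      simp only [Finset.mem_filter, Finset.mem_univ, true_and] at h1 h2
      simp only [base] at h1 h2
      obtain ⟨⟨hc, hi, hj, hij⟩, ho1⟩ := h1
      obtain ⟨-, ho2⟩ := h2
      exact not_oaf_both (by omega) hi hj hij ho1 ho2
    rw [hsplit, Finset.card_union_of_disjoint hdisj, count_oaf,
      count_swap m (fun A x y => Oaf A x y), count_oaf]
    ring
  have hff : ((Finset.univ : Finset (Finset (ZMod k) × ZMod k × ZMod k)).filter fun q =>
      q.1.card = m ∧ q.2.1 ∉ q.1 ∧ q.2.2 ∉ q.1 ∧ q.2.1 ≠ q.2.2 ∧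
      dirParent k q.1 q.2.1 false = dirParent k q.1 q.2.2 false).card
      = 2 * (k * (k - 1).choose (m + 1)) := by
    have he : ((Finset.univ : Finset (Finset (ZMod k) × ZMod k × ZMod k)).filter fun q =>
        q.1.card = m ∧ q.2.1 ∉ q.1 ∧ q.2.2 ∉ q.1 ∧ q.2.1 ≠ q.2.2 ∧
        dirParent k q.1 q.2.1 false = dirParent k q.1 q.2.2 false)
        = ((Finset.univ : Finset (Finset (ZMod k) × ZMod k × ZMod k)).filter fun q =>
          base m q ∧ (Oaf q.1 q.2.1 q.2.2 ∨ Oaf q.1 q.2.2 q.2.1)) := by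
      apply Finset.filter_congr
      rintro ⟨A, i, j⟩ -
      simp only [base]
      constructor
      · rintro ⟨hc, hi, hj, hij, heq⟩
        exact ⟨⟨hc, hi, hj, hij⟩, (char_ff (by omega) hi hj hij).mp heq⟩
      · rintro ⟨⟨hc, hi, hj, hij⟩, hor⟩
        exact ⟨hc, hi, hj, hij, (char_ff (by omega) hi hj hij).mpr hor⟩
    rw [he]
    have hsplit : ((Finset.univ : Finset (Finset (ZMod k) × ZMod k × ZMod k)).filter fun q =>
        base m q ∧ (Oaf q.1 q.2.1 q.2.2 ∨ Oaf q.1 q.2.2 q.2.1))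
        = ((Finset.univ : Finset (Finset (ZMod k) × ZMod k × ZMod k)).filter fun q =>
            base m q ∧ Oaf q.1 q.2.1 q.2.2)
          ∪ ((Finset.univ : Finset (Finset (ZMod k) × ZMod k × ZMod k)).filter fun q =>
            base m q ∧ Oaf q.1 q.2.2 q.2.1) := by
      ext q
      simp only [Finset.mem_filter, Finset.mem_union, Finset.mem_univ, true_and]
      tauto
    have hdisj : Disjoint
        ((Finset.univ : Finset (Finset (ZMod k) × ZMod k × ZMod k)).filter fun q =>
          base m q ∧ Oaf q.1 q.2.1 q.2.2)
        ((Finset.univ : Finset (Finset (ZMod k) × ZMod k × ZMod k)).filter fun q =>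
          base m q ∧ Oaf q.1 q.2.2 q.2.1) := by
      rw [Finset.disjoint_left]
      rintro ⟨A, i, j⟩ h1 h2
      simp only [Finset.mem_filter, Finset.mem_univ, true_and] at h1 h2
      simp only [base] at h1 h2
      obtain ⟨⟨hc, hi, hj, hij⟩, ho1⟩ := h1
      obtain ⟨-, ho2⟩ := h2
      exact not_oaf_both (by omega) hi hj hij ho1 ho2
    rw [hsplit, Finset.card_union_of_disjoint hdisj, count_oaf,
      count_swap m (fun A x y => Oaf A x y), count_oaf]
    ring
  have htf : ((Finset.univ : Finset (Finset (ZMod k) × ZMod k × ZMod k)).filter fun q =>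
      q.1.card = m ∧ q.2.1 ∉ q.1 ∧ q.2.2 ∉ q.1 ∧ q.2.1 ≠ q.2.2 ∧
      dirParent k q.1 q.2.1 true = dirParent k q.1 q.2.2 false).card
      = k * (k - 1).choose (m + 1) := by
    have he : ((Finset.univ : Finset (Finset (ZMod k) × ZMod k × ZMod k)).filter fun q =>
        q.1.card = m ∧ q.2.1 ∉ q.1 ∧ q.2.2 ∉ q.1 ∧ q.2.1 ≠ q.2.2 ∧
        dirParent k q.1 q.2.1 true = dirParent k q.1 q.2.2 false)
        = ((Finset.univ : Finset (Finset (ZMod k) × ZMod k × ZMod k)).filter fun q =>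
          base m q ∧ OneIn q.1 q.2.1 q.2.2) := by
      apply Finset.filter_congr
      rintro ⟨A, i, j⟩ -
      simp only [base]
      constructor
      · rintro ⟨hc, hi, hj, hij, heq⟩
        exact ⟨⟨hc, hi, hj, hij⟩, (char_tf (by omega) hi hj hij).mp heq⟩
      · rintro ⟨⟨hc, hi, hj, hij⟩, hone⟩
        exact ⟨hc, hi, hj, hij, (char_tf (by omega) hi hj hij).mpr hone⟩
    rw [he, count_oneIn m (by omega)]
  have hft : ((Finset.univ : Finset (Finset (ZMod k) × ZMod k × ZMod k)).filter fun q =>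
      q.1.card = m ∧ q.2.1 ∉ q.1 ∧ q.2.2 ∉ q.1 ∧ q.2.1 ≠ q.2.2 ∧
      dirParent k q.1 q.2.1 false = dirParent k q.1 q.2.2 true).card
      = k * (k - 1).choose (m + 1) := by
    have he : ((Finset.univ : Finset (Finset (ZMod k) × ZMod k × ZMod k)).filter fun q =>
        q.1.card = m ∧ q.2.1 ∉ q.1 ∧ q.2.2 ∉ q.1 ∧ q.2.1 ≠ q.2.2 ∧
        dirParent k q.1 q.2.1 false = dirParent k q.1 q.2.2 true)
        = ((Finset.univ : Finset (Finset (ZMod k) × ZMod k × ZMod k)).filter fun q =>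
          base m q ∧ OneIn q.1 q.2.2 q.2.1) := by
      apply Finset.filter_congr
      rintro ⟨A, i, j⟩ -
      simp only [base]
      constructor
      · rintro ⟨hc, hi, hj, hij, heq⟩
        exact ⟨⟨hc, hi, hj, hij⟩, (char_ft (by omega) hi hj hij).mp heq⟩
      · rintro ⟨⟨hc, hi, hj, hij⟩, hone⟩
        exact ⟨hc, hi, hj, hij, (char_ft (by omega) hi hj hij).mpr hone⟩
    rw [he, count_swap m (fun A x y => OneIn A x y), count_oneIn m (by omega)]
  -- numerator
  have hnum : (((Finset.univ : Finset (Finset (ZMod k) × ZMod k × ZMod k × Bool × Bool)).filter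
      fun p => p.1.card = m ∧ p.2.1 ∉ p.1 ∧ p.2.2.1 ∉ p.1 ∧ p.2.1 ≠ p.2.2.1 ∧
        dirParent k p.1 p.2.1 p.2.2.2.1 = dirParent k p.1 p.2.2.1 p.2.2.2.2).card)
      = 6 * (k * (k - 1).choose (m + 1)) := by
    have h := bits_split (k := k) (fun q b1 b2 =>
      q.1.card = m ∧ q.2.1 ∉ q.1 ∧ q.2.2 ∉ q.1 ∧ q.2.1 ≠ q.2.2 ∧
      dirParent k q.1 q.2.1 b1 = dirParent k q.1 q.2.2 b2)
    rw [htt, htf, hft, hff] at h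
    exact (card_filter_congr' _ _ _ _ (fun p => Iff.rfl) _).trans (h.trans (by ring))
  -- denominator
  have hden : (((Finset.univ : Finset (Finset (ZMod k) × ZMod k × ZMod k × Bool × Bool)).filter
      fun p => p.1.card = m ∧ p.2.1 ∉ p.1 ∧ p.2.2.1 ∉ p.1 ∧ p.2.1 ≠ p.2.2.1).card)
      = 4 * (k * ((m + 1) * (k - 1).choose (m + 1))) := by
    have hbase : ((Finset.univ : Finset (Finset (ZMod k) × ZMod k × ZMod k)).filter fun q =>
        q.1.card = m ∧ q.2.1 ∉ q.1 ∧ q.2.2 ∉ q.1 ∧ q.2.1 ≠ q.2.2).card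
        = k * ((k - 1) * (k - 2).choose m) :=
      (card_filter_congr' _ _ _ _ (fun q => Iff.rfl) _).trans (count_base m)
    have h := bits_split (k := k) (fun q _ _ =>
      q.1.card = m ∧ q.2.1 ∉ q.1 ∧ q.2.2 ∉ q.1 ∧ q.2.1 ≠ q.2.2)
    rw [hbase] at h
    have hiden : (k - 1) * (k - 2).choose m = (m + 1) * (k - 1).choose (m + 1) := by
      have h2 := Nat.add_one_mul_choose_eq (k - 2) m
      rw [show k - 2 + 1 = k - 1 by omega] at h2
      rw [h2]
      ring
    refine (card_filter_congr' _ _ _ _ (fun p => Iff.rfl) _).trans (h.trans ?_)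
    rw [hiden]
    ring
  rw [hnum, hden]
  have hC0 : ((k - 1).choose (m + 1) : ℝ) ≠ 0 := Nat.cast_ne_zero.mpr hCpos.ne'
  have hk0 : (k : ℝ) ≠ 0 := Nat.cast_ne_zero.mpr hkpos.ne'
  have hm0 : ((m : ℝ) + 1) ≠ 0 := by positivity
  rw [show (1.5 : ℝ) = 3 / 2 by norm_num]
  push_cast
  field_simp
  ring
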